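/- Assume that α : [0,1] → ℝ is bounded and satisfies the regularity condition: there exist constants c_1, c_2 > 0 such that c_1 α(s) ≤ α(t) ≤ c_2 α(s) whenever 0 ≤ s ≤ t ≤ min(2s, 1). Then R^{α(·)} is a bounded operator on L_1[0,1] if and only if ∫₀¹ α(t) t^{α(t)−1} dt < ∞. -/

import Mathlib

open MeasureTheory Real Set Filter Topology
open scoped ENNReal NNReal

/-- The Riemann–Liouville operator of variable order `α(·)`:
`(R^{α(·)}f)(t) = (1/Γ(α(t))) ∫₀ᵗ (t−s)^{α(t)−1} f(s) ds`. -/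
noncomputable def RL (α f : ℝ → ℝ) (t : ℝ) : ℝ :=
  (1 / Real.Gamma (α t)) * ∫ s in Set.Ioc (0 : ℝ) t, (t - s) ^ (α t - 1) * f s

lemma measurable_Gamma : Measurable Real.Gamma := by
  classical
  set S : Set ℝ := Set.range (fun n : ℕ => -(n:ℝ)) with hSdef
  have hS : S.Countable := Set.countable_range _
  have : Countable S := hS.to_subtype
  refine measurable_of_restrict_of_restrict_compl hS.measurableSet
    (measurable_of_countable _) ?_
  have hcont : ContinuousOn Real.Gamma Sᶜ := by
    intro x hx
    have : ∀ m : ℕ, x ≠ -m := by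
      intro m hm
      exact hx ⟨m, hm.symm⟩
    exact ((Real.differentiableAt_Gamma this).continuousAt).continuousWithinAt
  exact (continuousOn_iff_continuous_restrict.1 hcont).measurable

lemma gamma_bounds (B : ℝ) (hB : 1 ≤ B) :
    ∃ m M : ℝ, 0 < m ∧ 0 < M ∧
      ∀ a : ℝ, 0 < a → a ≤ B → m ≤ Real.Gamma (a + 1) ∧ Real.Gamma (a + 1) ≤ M := by
  have hcont : ContinuousOn Real.Gamma (Set.Icc 1 (B + 1)) := by
    intro x hx
    have hx1 : (1:ℝ) ≤ x := hx.1
    have : ∀ m : ℕ, x ≠ -m := fun m hm => by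
      have : (0:ℝ) ≤ m := Nat.cast_nonneg m
      nlinarith
    exact ((Real.differentiableAt_Gamma this).continuousAt).continuousWithinAt
  have hcomp : IsCompact (Set.Icc (1:ℝ) (B + 1)) := isCompact_Icc
  have hne : (Set.Icc (1:ℝ) (B + 1)).Nonempty := ⟨1, by constructor <;> linarith⟩
  obtain ⟨xm, hxm, hmin⟩ := hcomp.exists_isMinOn hne hcont
  obtain ⟨xM, hxM, hmax⟩ := hcomp.exists_isMaxOn hne hcont
  refine ⟨Real.Gamma xm, Real.Gamma xM, Real.Gamma_pos_of_pos (by linarith [hxm.1]),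
    Real.Gamma_pos_of_pos (by linarith [hxM.1]), fun a ha haB => ?_⟩
  have hmem : a + 1 ∈ Set.Icc (1:ℝ) (B + 1) := ⟨by linarith, by linarith⟩
  exact ⟨hmin hmem, hmax hmem⟩

lemma lint_shift (s a b : ℝ) (f : ℝ → ℝ≥0∞) (hf : Measurable f) :
    ∫⁻ t in Set.Ioc a b, f (t - s) = ∫⁻ u in Set.Ioc (a - s) (b - s), f u := by
  have h1 : MeasurePreserving (fun u : ℝ => u + s) volume volume :=
    measurePreserving_add_right volume s
  have h2 : (fun u : ℝ => u + s) ⁻¹' (Set.Ioc a b) = Set.Ioc (a - s) (b - s) := by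
    ext u; simp [Set.mem_Ioc]
  calc ∫⁻ t in Set.Ioc a b, f (t - s)
      = ∫⁻ u in Set.Ioc (a-s) (b-s), f ((u + s) - s) := by
        rw [← h2]
        exact (h1.restrict_preimage measurableSet_Ioc).lintegral_comp
          (hf.comp (measurable_id.sub measurable_const)) |>.symm
    _ = ∫⁻ u in Set.Ioc (a-s) (b-s), f u := by simp

lemma lint_rpow (L p : ℝ) (hL : 0 ≤ L) (hp : 0 < p) :
    ∫⁻ u in Set.Ioc (0:ℝ) L, ENNReal.ofReal (u ^ (p - 1)) = ENNReal.ofReal (L ^ p / p) := by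
  have hint : IntervalIntegrable (fun u : ℝ => u ^ (p-1)) volume 0 L :=
    intervalIntegral.intervalIntegrable_rpow' (by linarith)
  have hIoc : IntegrableOn (fun u : ℝ => u ^ (p-1)) (Set.Ioc 0 L) volume := by
    rw [intervalIntegrable_iff, Set.uIoc_of_le hL] at hint; exact hint
  rw [← ofReal_integral_eq_lintegral_ofReal hIoc]
  · congr 1
    have heq := integral_rpow (a := 0) (b := L) (r := p - 1) (Or.inl (by linarith))
    rw [intervalIntegral.integral_of_le hL] at heq
    rw [heq]
    have h1 : p - 1 + 1 = p := by ring
    rw [h1, Real.zero_rpow hp.ne']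
    ring
  · exact (ae_restrict_iff' measurableSet_Ioc).2
      (Filter.Eventually.of_forall fun u hu => Real.rpow_nonneg hu.1.le _)

lemma one_div_Gamma_le {a m : ℝ} (ha : 0 < a) (hm : 0 < m) (hΓ : m ≤ Real.Gamma (a + 1)) :
    1 / Real.Gamma a ≤ a / m := by
  have h1 : Real.Gamma (a + 1) = a * Real.Gamma a := Real.Gamma_add_one ha.ne'
  have h2 : 0 < Real.Gamma a := Real.Gamma_pos_of_pos ha
  rw [div_le_div_iff₀ h2 hm, one_mul]
  nlinarith

lemma le_one_div_Gamma {a M : ℝ} (ha : 0 < a) (hM : 0 < M) (hΓ : Real.Gamma (a + 1) ≤ M) :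
    a / M ≤ 1 / Real.Gamma a := by
  have h1 : Real.Gamma (a + 1) = a * Real.Gamma a := Real.Gamma_add_one ha.ne'
  have h2 : 0 < Real.Gamma a := Real.Gamma_pos_of_pos ha
  rw [div_le_div_iff₀ hM h2, one_mul]
  nlinarith

lemma kernel_bound (α : ℝ → ℝ) (hα : Measurable α)
    (hpos : ∀ᵐ t ∂(volume.restrict (Set.Icc (0 : ℝ) 1)), 0 < α t)
    (B m : ℝ) (hm : 0 < m) (hB : ∀ t ∈ Set.Icc (0:ℝ) 1, α t ≤ B)
    (hΓ : ∀ a : ℝ, 0 < a → a ≤ B → m ≤ Real.Gamma (a + 1))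
    (c₁ c₂ : ℝ) (hc₁ : 0 < c₁) (hc₂ : 0 < c₂)
    (hreg : ∀ s t : ℝ, 0 ≤ s → s ≤ t → t ≤ min (2 * s) 1 →
      c₁ * α s ≤ α t ∧ α t ≤ c₂ * α s)
    (s : ℝ) (hs : s ∈ Set.Ioc (0:ℝ) 1) (hαs : 0 < α s) :
    ∫⁻ t in Set.Icc s 1, ENNReal.ofReal ((1 / Real.Gamma (α t)) * (t - s) ^ (α t - 1)) ≤
      ENNReal.ofReal (c₂ / (m * c₁)) +
        ENNReal.ofReal (2 / m) * ∫⁻ t in Set.Ioc (0:ℝ) 1, ENNReal.ofReal (α t * t ^ (α t - 1)) := by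
  obtain ⟨hs0, hs1⟩ := hs
  set M0 : ℝ := min (2 * s) 1 with hM0
  have hsM : s ≤ M0 := le_min (by linarith) hs1
  have hM1 : M0 ≤ 1 := min_le_right _ _
  have hM2s : M0 ≤ 2 * s := min_le_left _ _
  set K : ℝ → ℝ≥0∞ := fun t => ENNReal.ofReal ((1 / Real.Gamma (α t)) * (t - s) ^ (α t - 1))
    with hK
  have hIcc : ∫⁻ t in Set.Icc s 1, K t = ∫⁻ t in Set.Ioc s 1, K t :=
    (setLIntegral_congr Ioc_ae_eq_Icc).symm
  rw [hIcc, ← Set.Ioc_union_Ioc_eq_Ioc hsM hM1,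
    lintegral_union measurableSet_Ioc (Set.Ioc_disjoint_Ioc_of_le le_rfl)]
  have hnear : ∫⁻ t in Set.Ioc s M0, K t ≤ ENNReal.ofReal (c₂ / (m * c₁)) := by
    have hp : 0 < c₁ * α s := mul_pos hc₁ hαs
    have hmeas : Measurable fun t : ℝ =>
        ENNReal.ofReal (c₂ * α s / m) * ENNReal.ofReal ((t - s) ^ (c₁ * α s - 1)) := by
      exact (measurable_const.mul (ENNReal.measurable_ofReal.comp
        (((measurable_id.sub measurable_const).pow measurable_const))))
    calc ∫⁻ t in Set.Ioc s M0, K t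
        ≤ ∫⁻ t in Set.Ioc s M0,
            ENNReal.ofReal (c₂ * α s / m) * ENNReal.ofReal ((t - s) ^ (c₁ * α s - 1)) := by
          apply setLIntegral_mono hmeas
          intro t ht
          obtain ⟨h1, h2⟩ := hreg s t hs0.le ht.1.le ht.2
          have hαt : 0 < α t := lt_of_lt_of_le hp h1
          have htIcc : t ∈ Set.Icc (0:ℝ) 1 := ⟨by linarith [ht.1], le_trans ht.2 hM1⟩
          have hG : 1 / Real.Gamma (α t) ≤ α t / m :=
            one_div_Gamma_le hαt hm (hΓ _ hαt (hB t htIcc))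
          have hts0 : 0 < t - s := by linarith [ht.1]
          have hts1 : t - s ≤ 1 := by
            have : t ≤ 2 * s := le_trans ht.2 hM2s
            linarith
          have hr : (t - s) ^ (α t - 1) ≤ (t - s) ^ (c₁ * α s - 1) :=
            Real.rpow_le_rpow_of_exponent_ge hts0 hts1 (by linarith)
          rw [← ENNReal.ofReal_mul (by positivity)]
          apply ENNReal.ofReal_le_ofReal
          have hGle : 1 / Real.Gamma (α t) ≤ c₂ * α s / m := by
            apply le_trans hG
            gcongr
          exact mul_le_mul hGle hr (Real.rpow_nonneg hts0.le _) (by positivity)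
      _ = ENNReal.ofReal (c₂ * α s / m) *
            ∫⁻ t in Set.Ioc s M0, ENNReal.ofReal ((t - s) ^ (c₁ * α s - 1)) :=
          lintegral_const_mul _ (ENNReal.measurable_ofReal.comp
            ((measurable_id.sub measurable_const).pow measurable_const))
      _ = ENNReal.ofReal (c₂ * α s / m) * ENNReal.ofReal ((M0 - s) ^ (c₁ * α s) / (c₁ * α s)) := by
          rw [lint_shift s s M0 (fun u => ENNReal.ofReal (u ^ (c₁ * α s - 1)))
            (ENNReal.measurable_ofReal.comp (measurable_id.pow measurable_const)), sub_self,
            lint_rpow _ _ (by linarith) hp]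
      _ ≤ ENNReal.ofReal (c₂ / (m * c₁)) := by
          rw [← ENNReal.ofReal_mul (by positivity)]
          apply ENNReal.ofReal_le_ofReal
          have hq1 : (M0 - s) ^ (c₁ * α s) ≤ 1 :=
            Real.rpow_le_one (by linarith) (by linarith) hp.le
          have hq0 : 0 ≤ (M0 - s) ^ (c₁ * α s) := Real.rpow_nonneg (by linarith) _
          have heq : c₂ * α s / m * ((M0 - s) ^ (c₁ * α s) / (c₁ * α s)) =
              c₂ / (m * c₁) * ((M0 - s) ^ (c₁ * α s)) := by
            field_simp
          rw [heq]
          have : 0 ≤ c₂ / (m * c₁) := by positivity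
          nlinarith
  have hfar : ∫⁻ t in Set.Ioc M0 1, K t ≤
      ENNReal.ofReal (2 / m) * ∫⁻ t in Set.Ioc (0:ℝ) 1, ENNReal.ofReal (α t * t ^ (α t - 1)) := by
    have hae : ∀ᵐ t ∂volume.restrict (Set.Ioc M0 1), 0 < α t :=
      ae_restrict_of_ae_restrict_of_subset
        (Set.Ioc_subset_Icc_self.trans (Set.Icc_subset_Icc (by linarith) le_rfl)) hpos
    calc ∫⁻ t in Set.Ioc M0 1, K t
        ≤ ∫⁻ t in Set.Ioc M0 1,
            ENNReal.ofReal (2 / m) * ENNReal.ofReal (α t * t ^ (α t - 1)) := by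
          apply lintegral_mono_ae
          filter_upwards [hae, ae_restrict_mem measurableSet_Ioc] with t hαt ht
          have h2st : 2 * s < t := by
            rcases le_or_gt (2 * s) 1 with h | h
            · have hmin : M0 = 2 * s := min_eq_left h
              linarith [ht.1]
            · have hmin : M0 = 1 := min_eq_right h.le
              linarith [ht.1, ht.2]
          have ht0 : 0 < t := by linarith
          have htIcc : t ∈ Set.Icc (0:ℝ) 1 := ⟨ht0.le, ht.2⟩
          have hG : 1 / Real.Gamma (α t) ≤ α t / m :=
            one_div_Gamma_le hαt hm (hΓ _ hαt (hB t htIcc))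
          have hts0 : 0 < t - s := by linarith
          have hr : (t - s) ^ (α t - 1) ≤ 2 * t ^ (α t - 1) := by
            have htn : 0 ≤ t ^ (α t - 1) := Real.rpow_nonneg ht0.le _
            rcases le_or_gt 1 (α t) with h | h
            · have h1 : (t - s) ^ (α t - 1) ≤ t ^ (α t - 1) :=
                Real.rpow_le_rpow hts0.le (by linarith) (by linarith)
              linarith
            · have h1 : (t - s) ^ (α t - 1) ≤ (t / 2) ^ (α t - 1) :=
                Real.rpow_le_rpow_of_nonpos (by linarith) (by linarith) (by linarith)
              have h2 : (t / 2) ^ (α t - 1) = t ^ (α t - 1) * ((2:ℝ) ^ (α t - 1))⁻¹ := by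
                rw [Real.div_rpow ht0.le (by norm_num : (0:ℝ) ≤ 2)]
                ring
              have h3 : ((2:ℝ) ^ (α t - 1))⁻¹ = (2:ℝ) ^ (1 - α t) := by
                rw [← Real.rpow_neg (by norm_num : (0:ℝ) ≤ 2)]
                ring_nf
              have h4 : (2:ℝ) ^ (1 - α t) ≤ 2 := by
                calc (2:ℝ) ^ (1 - α t) ≤ (2:ℝ) ^ (1:ℝ) :=
                      Real.rpow_le_rpow_of_exponent_le one_le_two (by linarith)
                  _ = 2 := Real.rpow_one 2
              rw [h2, h3] at h1
              nlinarith
          rw [← ENNReal.ofReal_mul (by positivity)]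
          apply ENNReal.ofReal_le_ofReal
          have : 1 / Real.Gamma (α t) * (t - s) ^ (α t - 1) ≤ (α t / m) * (2 * t ^ (α t - 1)) :=
            mul_le_mul hG hr (Real.rpow_nonneg hts0.le _) (by positivity)
          calc 1 / Real.Gamma (α t) * (t - s) ^ (α t - 1)
              ≤ (α t / m) * (2 * t ^ (α t - 1)) := this
            _ = 2 / m * (α t * t ^ (α t - 1)) := by ring
      _ = ENNReal.ofReal (2 / m) *
            ∫⁻ t in Set.Ioc M0 1, ENNReal.ofReal (α t * t ^ (α t - 1)) :=
          lintegral_const_mul _ (ENNReal.measurable_ofReal.comp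
            (hα.mul (measurable_id.pow (hα.sub measurable_const))))
      _ ≤ ENNReal.ofReal (2 / m) *
            ∫⁻ t in Set.Ioc (0:ℝ) 1, ENNReal.ofReal (α t * t ^ (α t - 1)) := by
          apply mul_le_mul_right
          exact lintegral_mono_set (Set.Ioc_subset_Ioc (by linarith) le_rfl)
  exact add_le_add hnear hfar

lemma bounded_of_finite (α : ℝ → ℝ) (hα : Measurable α)
    (hpos : ∀ᵐ t ∂(volume.restrict (Set.Icc (0 : ℝ) 1)), 0 < α t)
    (B m : ℝ) (hm : 0 < m) (hB : ∀ t ∈ Set.Icc (0:ℝ) 1, α t ≤ B)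
    (hΓ : ∀ a : ℝ, 0 < a → a ≤ B → m ≤ Real.Gamma (a + 1))
    (c₁ c₂ : ℝ) (hc₁ : 0 < c₁) (hc₂ : 0 < c₂)
    (hreg : ∀ s t : ℝ, 0 ≤ s → s ≤ t → t ≤ min (2 * s) 1 →
      c₁ * α s ≤ α t ∧ α t ≤ c₂ * α s)
    (hJ : (∫⁻ t in Set.Ioc (0 : ℝ) 1, ENNReal.ofReal (α t * t ^ (α t - 1))) < ⊤) :
    ∃ C : ℝ, 0 < C ∧
      ∀ f : ℝ → ℝ, MemLp f 1 (volume.restrict (Set.Icc (0 : ℝ) 1)) →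
        eLpNorm (RL α f) 1 (volume.restrict (Set.Icc (0 : ℝ) 1)) ≤
          ENNReal.ofReal C * eLpNorm f 1 (volume.restrict (Set.Icc (0 : ℝ) 1)) := by
  set J : ℝ≥0∞ := ∫⁻ t in Set.Ioc (0 : ℝ) 1, ENNReal.ofReal (α t * t ^ (α t - 1)) with hJdef
  set C' : ℝ := c₂ / (m * c₁) + (2 / m) * J.toReal with hC'
  have hC'0 : 0 ≤ C' := by positivity
  refine ⟨C' + 1, by linarith, fun f hf => ?_⟩
  have hCbig : ENNReal.ofReal (c₂ / (m * c₁)) + ENNReal.ofReal (2 / m) * J ≤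
      ENNReal.ofReal (C' + 1) := by
    have hJr : J = ENNReal.ofReal J.toReal := (ENNReal.ofReal_toReal hJ.ne).symm
    calc ENNReal.ofReal (c₂ / (m * c₁)) + ENNReal.ofReal (2 / m) * J
        = ENNReal.ofReal (c₂ / (m * c₁)) + ENNReal.ofReal ((2 / m) * J.toReal) := by
          rw [hJr, ← ENNReal.ofReal_mul (by positivity)]
          rw [ENNReal.toReal_ofReal (ENNReal.toReal_nonneg)]
      _ = ENNReal.ofReal C' := by
          rw [← ENNReal.ofReal_add (by positivity) (by positivity)]
      _ ≤ ENNReal.ofReal (C' + 1) := ENNReal.ofReal_le_ofReal (by linarith)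
  -- replace f by a measurable representative g
  obtain ⟨g, hgsm, hfg⟩ := hf.aestronglyMeasurable
  have hgm : Measurable g := hgsm.measurable
  have hRLfg : eLpNorm (RL α f) 1 (volume.restrict (Set.Icc (0 : ℝ) 1)) =
      eLpNorm (RL α g) 1 (volume.restrict (Set.Icc (0 : ℝ) 1)) := by
    apply eLpNorm_congr_ae
    filter_upwards [ae_restrict_mem measurableSet_Icc] with t ht
    have hsub : Set.Ioc (0:ℝ) t ⊆ Set.Icc (0:ℝ) 1 :=
      Set.Ioc_subset_Icc_self.trans (Set.Icc_subset_Icc le_rfl ht.2)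
    have hae : f =ᵐ[volume.restrict (Set.Ioc (0:ℝ) t)] g :=
      ae_restrict_of_ae_restrict_of_subset hsub hfg
    unfold RL
    congr 1
    apply integral_congr_ae
    filter_upwards [hae] with s hsx
    rw [hsx]
  have hfgnorm : eLpNorm f 1 (volume.restrict (Set.Icc (0 : ℝ) 1)) =
      eLpNorm g 1 (volume.restrict (Set.Icc (0 : ℝ) 1)) := eLpNorm_congr_ae hfg
  rw [hRLfg, hfgnorm]
  set F : ℝ → ℝ → ℝ≥0∞ := fun t s =>
    ENNReal.ofReal ((1 / Real.Gamma (α t)) * (t - s) ^ (α t - 1)) * ‖g s‖₊ with hF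
  have hFmeas : Measurable (Function.uncurry F) := by
    refine Measurable.mul
      (f := fun p : ℝ × ℝ => ENNReal.ofReal ((1 / Real.Gamma (α p.1)) * (p.1 - p.2) ^ (α p.1 - 1)))
      (g := fun p : ℝ × ℝ => (‖g p.2‖₊ : ℝ≥0∞)) ?_ ?_
    · apply ENNReal.measurable_ofReal.comp
      apply Measurable.mul
      · exact measurable_const.div (measurable_Gamma.comp (hα.comp measurable_fst))
      · exact (measurable_fst.sub measurable_snd).pow
          ((hα.comp measurable_fst).sub measurable_const)
    · exact (hgm.comp measurable_snd).enorm
  -- pointwise bound on ‖RL g t‖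
  have hpt : ∀ᵐ t ∂(volume.restrict (Set.Icc (0 : ℝ) 1)),
      (‖RL α g t‖₊ : ℝ≥0∞) ≤ ∫⁻ s in Set.Ioc (0:ℝ) t, F t s := by
    filter_upwards [hpos, ae_restrict_mem measurableSet_Icc] with t hαt ht
    have hΓt : 0 < Real.Gamma (α t) := Real.Gamma_pos_of_pos hαt
    have hΓt' : (0:ℝ) ≤ 1 / Real.Gamma (α t) := by positivity
    by_cases hI : IntegrableOn (fun s => (t - s) ^ (α t - 1) * g s) (Set.Ioc 0 t) volume
    · have haeabs : (fun s => ‖(t - s) ^ (α t - 1) * g s‖) =ᵐ[volume.restrict (Set.Ioc 0 t)]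
          (fun s => (t - s) ^ (α t - 1) * |g s|) := by
        filter_upwards [ae_restrict_mem measurableSet_Ioc] with s hs
        rw [Real.norm_eq_abs, abs_mul, abs_of_nonneg (Real.rpow_nonneg (by linarith [hs.2]) _)]
      have habs : IntegrableOn (fun s => (t - s) ^ (α t - 1) * |g s|) (Set.Ioc 0 t) volume :=
        hI.norm.congr haeabs
      have hRLle : ‖RL α g t‖ ≤
          (1 / Real.Gamma (α t)) * ∫ s in Set.Ioc (0:ℝ) t, (t - s) ^ (α t - 1) * |g s| := by
        unfold RL
        rw [norm_mul, Real.norm_eq_abs (1 / Real.Gamma (α t)), abs_of_nonneg hΓt']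
        apply mul_le_mul_of_nonneg_left _ hΓt'
        calc ‖∫ s in Set.Ioc (0:ℝ) t, (t - s) ^ (α t - 1) * g s‖
            ≤ ∫ s in Set.Ioc (0:ℝ) t, ‖(t - s) ^ (α t - 1) * g s‖ :=
              norm_integral_le_integral_norm _
          _ = ∫ s in Set.Ioc (0:ℝ) t, (t - s) ^ (α t - 1) * |g s| :=
              integral_congr_ae haeabs
      calc (‖RL α g t‖₊ : ℝ≥0∞) = ENNReal.ofReal ‖RL α g t‖ := by
            rw [← enorm_eq_nnnorm, Real.enorm_eq_ofReal_abs, Real.norm_eq_abs]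
        _ ≤ ENNReal.ofReal ((1 / Real.Gamma (α t)) *
              ∫ s in Set.Ioc (0:ℝ) t, (t - s) ^ (α t - 1) * |g s|) :=
            ENNReal.ofReal_le_ofReal hRLle
        _ = ENNReal.ofReal (1 / Real.Gamma (α t)) *
              ENNReal.ofReal (∫ s in Set.Ioc (0:ℝ) t, (t - s) ^ (α t - 1) * |g s|) :=
            ENNReal.ofReal_mul hΓt'
        _ = ENNReal.ofReal (1 / Real.Gamma (α t)) *
              ∫⁻ s in Set.Ioc (0:ℝ) t, ENNReal.ofReal ((t - s) ^ (α t - 1) * |g s|) := by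
            rw [ofReal_integral_eq_lintegral_ofReal habs]
            filter_upwards [ae_restrict_mem measurableSet_Ioc] with s hs
            exact mul_nonneg (Real.rpow_nonneg (by linarith [hs.2]) _) (abs_nonneg _)
        _ = ∫⁻ s in Set.Ioc (0:ℝ) t, ENNReal.ofReal (1 / Real.Gamma (α t)) *
              ENNReal.ofReal ((t - s) ^ (α t - 1) * |g s|) := by
            rw [lintegral_const_mul]
            exact ENNReal.measurable_ofReal.comp
              (((measurable_const.sub measurable_id).pow measurable_const).mul hgm.abs)
        _ = ∫⁻ s in Set.Ioc (0:ℝ) t, F t s := by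
            apply lintegral_congr_ae
            filter_upwards [ae_restrict_mem measurableSet_Ioc] with s hs
            have hr : (0:ℝ) ≤ (t - s) ^ (α t - 1) := Real.rpow_nonneg (by linarith [hs.2]) _
            calc ENNReal.ofReal (1 / Real.Gamma (α t)) *
                  ENNReal.ofReal ((t - s) ^ (α t - 1) * |g s|)
                = ENNReal.ofReal ((1 / Real.Gamma (α t)) * ((t - s) ^ (α t - 1) * |g s|)) :=
                  (ENNReal.ofReal_mul hΓt').symm
              _ = ENNReal.ofReal ((1 / Real.Gamma (α t) * (t - s) ^ (α t - 1)) * |g s|) := by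
                  rw [mul_assoc]
              _ = ENNReal.ofReal (1 / Real.Gamma (α t) * (t - s) ^ (α t - 1)) *
                  ENNReal.ofReal |g s| := ENNReal.ofReal_mul (by positivity)
              _ = F t s := by
                  simp only [hF, ← enorm_eq_nnnorm, Real.enorm_eq_ofReal_abs]
    · have h0 : ∫ s in Set.Ioc (0:ℝ) t, (t - s) ^ (α t - 1) * g s = 0 := integral_undef hI
      have hz : RL α g t = 0 := by unfold RL; rw [h0, mul_zero]
      rw [hz]
      simp
  -- Tonelli
  set T : Set (ℝ × ℝ) := {p : ℝ × ℝ | 0 < p.2 ∧ p.2 ≤ p.1} with hT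
  have hTmeas : MeasurableSet T := by
    apply MeasurableSet.inter
    · exact measurableSet_lt measurable_const measurable_snd
    · exact measurableSet_le measurable_snd measurable_fst
  set Φ : ℝ → ℝ → ℝ≥0∞ := fun t s => T.indicator (Function.uncurry F) (t, s) with hΦ
  have hΦmeas : Measurable (Function.uncurry Φ) := by
    have : Function.uncurry Φ = T.indicator (Function.uncurry F) := by
      funext p
      cases p
      rfl
    rw [this]
    exact hFmeas.indicator hTmeas
  have hinner : ∀ t : ℝ, ∫⁻ s in Set.Ioc (0:ℝ) t, F t s = ∫⁻ s, Φ t s ∂volume := by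
    intro t
    have : (fun s => Φ t s) = (Set.Ioc (0:ℝ) t).indicator (fun s => F t s) := by
      funext s
      by_cases hs : s ∈ Set.Ioc (0:ℝ) t
      · rw [Set.indicator_of_mem hs, hΦ]
        have : (t, s) ∈ T := ⟨hs.1, hs.2⟩
        simp only [Set.indicator_of_mem this]
        rfl
      · rw [Set.indicator_of_notMem hs, hΦ]
        have : (t, s) ∉ T := by
          intro hmem
          exact hs ⟨hmem.1, hmem.2⟩
        simp only [Set.indicator_of_notMem this]
    rw [this, lintegral_indicator measurableSet_Ioc]
  have hswap : ∫⁻ t, (∫⁻ s, Φ t s ∂volume) ∂(volume.restrict (Set.Icc (0 : ℝ) 1)) =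
      ∫⁻ s, (∫⁻ t, Φ t s ∂(volume.restrict (Set.Icc (0 : ℝ) 1))) ∂volume :=
    lintegral_lintegral_swap hΦmeas.aemeasurable
  -- bound the inner integral in s
  have hker : ∀ᵐ s ∂(volume : Measure ℝ),
      (∫⁻ t, Φ t s ∂(volume.restrict (Set.Icc (0 : ℝ) 1))) ≤
        ENNReal.ofReal (C' + 1) * (Set.Icc (0:ℝ) 1).indicator (fun s => (‖g s‖₊ : ℝ≥0∞)) s := by
    have h1 : ∀ᵐ s ∂(volume : Measure ℝ), s ∈ Set.Icc (0:ℝ) 1 → 0 < α s :=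
      (ae_restrict_iff' measurableSet_Icc).1 hpos
    filter_upwards [h1] with s hs1
    rcases le_or_gt s 0 with hsneg | hspos
    · -- s ≤ 0 : Φ t s = 0 always
      have hzero : ∀ t : ℝ, Φ t s = 0 := by
        intro t
        rw [hΦ]
        apply Set.indicator_of_notMem
        intro hmem
        exact absurd hmem.1 (not_lt.2 hsneg)
      simp only [hzero, lintegral_zero]
      exact zero_le
    rcases le_or_gt s 1 with hsle | hsgt
    · -- main case : s ∈ Ioc 0 1
      have hαs : 0 < α s := hs1 ⟨hspos.le, hsle⟩
      have hind : (Set.Icc (0:ℝ) 1).indicator (fun s => (‖g s‖₊ : ℝ≥0∞)) s = (‖g s‖₊ : ℝ≥0∞) :=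
        Set.indicator_of_mem (Set.mem_Icc.mpr ⟨hspos.le, hsle⟩) _
      rw [hind]
      have hΦt : ∀ t : ℝ, Φ t s = (Set.Ici s).indicator
          (fun t => ENNReal.ofReal ((1 / Real.Gamma (α t)) * (t - s) ^ (α t - 1)) * ‖g s‖₊) t := by
        intro t
        by_cases hts : s ≤ t
        · rw [Set.indicator_of_mem (Set.mem_Ici.mpr hts)]
          simp only [hΦ]
          rw [Set.indicator_of_mem (show (t,s) ∈ T from ⟨hspos, hts⟩)]
          rfl
        · rw [Set.indicator_of_notMem (fun hmem => hts (Set.mem_Ici.mp hmem))]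
          simp only [hΦ]
          exact Set.indicator_of_notMem (fun hmem => hts hmem.2) _
      calc ∫⁻ t, Φ t s ∂(volume.restrict (Set.Icc (0 : ℝ) 1))
          = ∫⁻ t in Set.Ici s, ENNReal.ofReal ((1 / Real.Gamma (α t)) * (t - s) ^ (α t - 1)) *
              ‖g s‖₊ ∂(volume.restrict (Set.Icc (0 : ℝ) 1)) := by
            simp_rw [hΦt]
            rw [lintegral_indicator measurableSet_Ici]
        _ = ∫⁻ t in Set.Icc s 1, ENNReal.ofReal ((1 / Real.Gamma (α t)) * (t - s) ^ (α t - 1)) *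
              ‖g s‖₊ ∂volume := by
            have hset : Set.Ici s ∩ Set.Icc (0:ℝ) 1 = Set.Icc s 1 := by
              ext t
              simp only [Set.mem_inter_iff, Set.mem_Ici, Set.mem_Icc]
              constructor
              · rintro ⟨h1', h2'⟩; exact ⟨h1', h2'.2⟩
              · rintro ⟨h1', h2'⟩; exact ⟨h1', le_trans hspos.le h1', h2'⟩
            rw [Measure.restrict_restrict measurableSet_Ici, hset]
        _ = (∫⁻ t in Set.Icc s 1,
              ENNReal.ofReal ((1 / Real.Gamma (α t)) * (t - s) ^ (α t - 1)) ∂volume) * ‖g s‖₊ := by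
            apply lintegral_mul_const
            exact ENNReal.measurable_ofReal.comp
              ((measurable_const.div (measurable_Gamma.comp hα)).mul
                ((measurable_id.sub measurable_const).pow (hα.sub measurable_const)))
        _ ≤ (ENNReal.ofReal (c₂ / (m * c₁)) + ENNReal.ofReal (2 / m) * J) * ‖g s‖₊ := by
            apply mul_le_mul_left
            exact kernel_bound α hα hpos B m hm hB hΓ c₁ c₂ hc₁ hc₂ hreg s ⟨hspos, hsle⟩ hαs
        _ ≤ ENNReal.ofReal (C' + 1) * ‖g s‖₊ := mul_le_mul_left hCbig _
    · -- s > 1 : Φ t s = 0 on Icc 0 1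
      have : ∫⁻ t, Φ t s ∂(volume.restrict (Set.Icc (0 : ℝ) 1)) = 0 := by
        rw [← lintegral_zero (μ := volume.restrict (Set.Icc (0 : ℝ) 1))]
        apply lintegral_congr_ae
        filter_upwards [ae_restrict_mem measurableSet_Icc] with t ht
        rw [hΦ]
        apply Set.indicator_of_notMem
        intro hmem
        have h2' : s ≤ t := hmem.2
        linarith [ht.2]
      rw [this]
      exact zero_le
  -- put everything together
  calc eLpNorm (RL α g) 1 (volume.restrict (Set.Icc (0 : ℝ) 1))
      = ∫⁻ t, (‖RL α g t‖₊ : ℝ≥0∞) ∂(volume.restrict (Set.Icc (0 : ℝ) 1)) :=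
        eLpNorm_one_eq_lintegral_enorm
    _ ≤ ∫⁻ t, (∫⁻ s, Φ t s ∂volume) ∂(volume.restrict (Set.Icc (0 : ℝ) 1)) := by
        apply lintegral_mono_ae
        filter_upwards [hpt] with t hptt
        rw [← hinner t]
        exact hptt
    _ = ∫⁻ s, (∫⁻ t, Φ t s ∂(volume.restrict (Set.Icc (0 : ℝ) 1))) ∂volume := hswap
    _ ≤ ∫⁻ s, ENNReal.ofReal (C' + 1) *
          (Set.Icc (0:ℝ) 1).indicator (fun s => (‖g s‖₊ : ℝ≥0∞)) s ∂volume :=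
        lintegral_mono_ae hker
    _ = ENNReal.ofReal (C' + 1) *
          ∫⁻ s, (Set.Icc (0:ℝ) 1).indicator (fun s => (‖g s‖₊ : ℝ≥0∞)) s ∂volume := by
        apply lintegral_const_mul
        exact (hgm.enorm).indicator measurableSet_Icc
    _ = ENNReal.ofReal (C' + 1) * eLpNorm g 1 (volume.restrict (Set.Icc (0 : ℝ) 1)) := by
        rw [lintegral_indicator measurableSet_Icc, eLpNorm_one_eq_lintegral_enorm]
        rfl

lemma finite_of_bounded (α : ℝ → ℝ) (hα : Measurable α)
    (hpos : ∀ᵐ t ∂(volume.restrict (Set.Icc (0 : ℝ) 1)), 0 < α t)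
    (B M : ℝ) (hM : 0 < M) (hB : ∀ t ∈ Set.Icc (0:ℝ) 1, α t ≤ B)
    (hΓM : ∀ a : ℝ, 0 < a → a ≤ B → Real.Gamma (a + 1) ≤ M)
    (C : ℝ) (hC : 0 < C)
    (hbound : ∀ f : ℝ → ℝ, MemLp f 1 (volume.restrict (Set.Icc (0 : ℝ) 1)) →
      eLpNorm (RL α f) 1 (volume.restrict (Set.Icc (0 : ℝ) 1)) ≤
        ENNReal.ofReal C * eLpNorm f 1 (volume.restrict (Set.Icc (0 : ℝ) 1))) :
    (∫⁻ t in Set.Ioc (0 : ℝ) 1, ENNReal.ofReal (α t * t ^ (α t - 1))) < ⊤ := by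
  set μ := volume.restrict (Set.Icc (0 : ℝ) 1) with hμ
  set ε : ℕ → ℝ := fun n => 1 / (n + 1) with hε
  have hε0 : ∀ n, 0 < ε n := fun n => by positivity
  have hε1 : ∀ n, ε n ≤ 1 := fun n => by
    rw [hε, div_le_one (by positivity)]
    linarith [Nat.cast_nonneg (α := ℝ) n]
  -- the test functions
  set f : ℕ → ℝ → ℝ := fun n => (Set.Ioc (0:ℝ) (ε n)).indicator (fun _ => (n + 1 : ℝ)) with hf
  have hfmem : ∀ n, MemLp (f n) 1 μ := by
    intro n
    rw [memLp_one_iff_integrable]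
    exact (integrable_const _).indicator measurableSet_Ioc
  have hfnorm : ∀ n, eLpNorm (f n) 1 μ = 1 := by
    intro n
    rw [eLpNorm_one_eq_lintegral_enorm]
    have hptw : (fun s => (‖f n s‖₊ : ℝ≥0∞)) =
        (Set.Ioc (0:ℝ) (ε n)).indicator (fun _ => ENNReal.ofReal (n + 1)) := by
      funext s
      by_cases hs : s ∈ Set.Ioc (0:ℝ) (ε n)
      · rw [Set.indicator_of_mem hs, hf]
        simp only [Set.indicator_of_mem hs]
        rw [← enorm_eq_nnnorm, Real.enorm_eq_ofReal_abs, abs_of_pos (by positivity)]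
      · rw [Set.indicator_of_notMem hs, hf]
        simp only [Set.indicator_of_notMem hs]
        simp
    have hsub : Set.Ioc (0:ℝ) (ε n) ∩ Set.Icc (0:ℝ) 1 = Set.Ioc (0:ℝ) (ε n) := by
      apply Set.inter_eq_left.mpr
      exact Set.Ioc_subset_Icc_self.trans (Set.Icc_subset_Icc le_rfl (hε1 n))
    rw [show (fun s => ‖f n s‖ₑ) = _ from hptw, lintegral_indicator measurableSet_Ioc, setLIntegral_const, hμ,
      Measure.restrict_apply measurableSet_Ioc, hsub, Real.volume_Ioc,
      ← ENNReal.ofReal_mul (by positivity)]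
    have : (n + 1 : ℝ) * (ε n - 0) = 1 := by
      rw [hε]
      field_simp
      ring
    rw [this, ENNReal.ofReal_one]
  -- lower bounds for the operator applied to the test functions
  set G : ℕ → ℝ → ℝ≥0∞ := fun n => (Set.Ioc (ε n) 1).indicator
    (fun t => ENNReal.ofReal ((1 / Real.Gamma (α t)) *
      min (t ^ (α t - 1)) ((t - ε n) ^ (α t - 1)))) with hG
  have hGmeas : ∀ n, Measurable (G n) := by
    intro n
    apply Measurable.indicator _ measurableSet_Ioc
    apply ENNReal.measurable_ofReal.comp
    apply Measurable.mul
    · exact measurable_const.div (measurable_Gamma.comp hα)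
    · exact Measurable.min (measurable_id.pow (hα.sub measurable_const))
        ((measurable_id.sub measurable_const).pow (hα.sub measurable_const))
  have hclaimA : ∀ n, ∫⁻ t, G n t ∂μ ≤ ENNReal.ofReal C := by
    intro n
    have hb := hbound (f n) (hfmem n)
    rw [hfnorm n, mul_one] at hb
    refine le_trans ?_ (le_trans (le_of_eq eLpNorm_one_eq_lintegral_enorm.symm) hb)
    apply lintegral_mono_ae
    filter_upwards [hpos, ae_restrict_mem measurableSet_Icc] with t hαt ht
    have hΓt : 0 < Real.Gamma (α t) := Real.Gamma_pos_of_pos hαt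
    by_cases htε : ε n < t
    · have htmem : t ∈ Set.Ioc (ε n) 1 := ⟨htε, ht.2⟩
      set mn : ℝ := min (t ^ (α t - 1)) ((t - ε n) ^ (α t - 1)) with hmn
      have htε0 : 0 < t - ε n := by linarith
      have hmn0 : 0 ≤ mn :=
        le_min (Real.rpow_nonneg (by linarith [hε0 n]) _) (Real.rpow_nonneg htε0.le _)
      simp only [hG]
      rw [Set.indicator_of_mem htmem]
      -- compute a lower bound for RL α (f n) t
      have hfn_eq : ∀ s : ℝ, (t - s) ^ (α t - 1) * f n s =
          (Set.Ioc (0:ℝ) (ε n)).indicator (fun s => (t - s) ^ (α t - 1) * (n + 1)) s := by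
        intro s
        by_cases hs : s ∈ Set.Ioc (0:ℝ) (ε n)
        · rw [Set.indicator_of_mem hs, hf]
          simp only [Set.indicator_of_mem hs]
        · rw [Set.indicator_of_notMem hs, hf]
          simp only [Set.indicator_of_notMem hs, mul_zero]
      have hIeq : ∫ s in Set.Ioc (0:ℝ) t, (t - s) ^ (α t - 1) * f n s =
          ∫ s in Set.Ioc (0:ℝ) (ε n), (t - s) ^ (α t - 1) * (n + 1) := by
        simp_rw [hfn_eq]
        rw [setIntegral_indicator measurableSet_Ioc]
        congr 1
        rw [Set.inter_eq_right.mpr (Set.Ioc_subset_Ioc le_rfl htε.le)]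
      have hcont : IntegrableOn (fun s => (t - s) ^ (α t - 1) * (n + 1 : ℝ))
          (Set.Ioc 0 (ε n)) volume := by
        apply IntegrableOn.mono_set _ Set.Ioc_subset_Icc_self
        apply ContinuousOn.integrableOn_compact isCompact_Icc
        apply ContinuousOn.mul _ continuousOn_const
        apply ContinuousOn.rpow_const
        · exact (continuous_const.sub continuous_id).continuousOn
        · intro x hx
          left
          have : x ≤ ε n := hx.2
          intro h0
          have : t - x ≥ t - ε n := by linarith
          linarith
      have hlow : ∀ s ∈ Set.Ioc (0:ℝ) (ε n), mn * (n + 1) ≤ (t - s) ^ (α t - 1) * (n + 1) := by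
        intro s hs
        have hts : 0 < t - s := by linarith [hs.2]
        have hrs : mn ≤ (t - s) ^ (α t - 1) := by
          rcases le_or_gt 0 (α t - 1) with he | he
          · refine le_trans (min_le_right _ _) ?_
            exact Real.rpow_le_rpow htε0.le (by linarith [hs.2]) he
          · refine le_trans (min_le_left _ _) ?_
            exact Real.rpow_le_rpow_of_nonpos hts (by linarith [hs.1]) he.le
        have : (0:ℝ) ≤ n + 1 := by positivity
        nlinarith
      have hIlow : mn ≤ ∫ s in Set.Ioc (0:ℝ) t, (t - s) ^ (α t - 1) * f n s := by
        rw [hIeq]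
        have hconst : ∫ s in Set.Ioc (0:ℝ) (ε n), (mn * (n + 1)) ∂volume =
            (ε n) * (mn * (n + 1)) := by
          rw [setIntegral_const, measureReal_def, Real.volume_Ioc, smul_eq_mul,
            ENNReal.toReal_ofReal (by linarith [hε0 n])]
          ring_nf
        have hmono := setIntegral_mono_on
          (integrableOn_const (by rw [Real.volume_Ioc]; exact ENNReal.ofReal_ne_top))
          hcont measurableSet_Ioc hlow
        rw [hconst] at hmono
        have : ε n * (mn * (n + 1)) = mn := by
          rw [hε]
          field_simp
        linarith
      have hRLlow : (1 / Real.Gamma (α t)) * mn ≤ RL α (f n) t := by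
        unfold RL
        apply mul_le_mul_of_nonneg_left hIlow (by positivity)
      calc ENNReal.ofReal ((1 / Real.Gamma (α t)) * mn)
          ≤ ENNReal.ofReal (RL α (f n) t) := ENNReal.ofReal_le_ofReal hRLlow
        _ ≤ (‖RL α (f n) t‖₊ : ℝ≥0∞) := by
            rw [← enorm_eq_nnnorm, Real.enorm_eq_ofReal_abs]
            exact ENNReal.ofReal_le_ofReal (le_abs_self _)
    · simp only [hG]
      rw [Set.indicator_of_notMem (fun hmem => htε (Set.mem_Ioc.mp hmem).1)]
      exact zero_le
  -- Fatou argument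
  have hliminf : ∀ᵐ t ∂μ, (Set.Ioc (0:ℝ) 1).indicator
      (fun t => ENNReal.ofReal ((1 / Real.Gamma (α t)) * t ^ (α t - 1))) t ≤
      liminf (fun n => G n t) atTop := by
    filter_upwards [hpos] with t hαt
    by_cases htIoc : t ∈ Set.Ioc (0:ℝ) 1
    · rw [Set.indicator_of_mem htIoc]
      have ht0 : 0 < t := htIoc.1
      have hεtend : Tendsto (fun n : ℕ => ε n) atTop (𝓝 0) := by
        rw [hε]
        exact tendsto_one_div_add_atTop_nhds_zero_nat
      have htend2 : Tendsto (fun n => ENNReal.ofReal ((1 / Real.Gamma (α t)) *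
          min (t ^ (α t - 1)) ((t - ε n) ^ (α t - 1)))) atTop
          (𝓝 (ENNReal.ofReal ((1 / Real.Gamma (α t)) * t ^ (α t - 1)))) := by
        have h1 : Tendsto (fun n : ℕ => t - ε n) atTop (𝓝 t) := by
          simpa using tendsto_const_nhds.sub hεtend
        have h2 : Tendsto (fun n : ℕ => (t - ε n) ^ (α t - 1)) atTop (𝓝 (t ^ (α t - 1))) :=
          ((Real.continuousAt_rpow_const t _ (Or.inl ht0.ne')).tendsto).comp h1
        have h3 : Tendsto (fun n : ℕ => min (t ^ (α t - 1)) ((t - ε n) ^ (α t - 1))) atTop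
            (𝓝 (min (t ^ (α t - 1)) (t ^ (α t - 1)))) := tendsto_const_nhds.min h2
        rw [min_self] at h3
        exact (ENNReal.continuous_ofReal.tendsto _).comp (tendsto_const_nhds.mul h3)
      have hev : ∀ᶠ n in atTop, G n t = ENNReal.ofReal ((1 / Real.Gamma (α t)) *
          min (t ^ (α t - 1)) ((t - ε n) ^ (α t - 1))) := by
        filter_upwards [hεtend.eventually_lt_const ht0] with n hn
        simp only [hG]
        rw [Set.indicator_of_mem (Set.mem_Ioc.mpr ⟨hn, htIoc.2⟩)]
      have hev' : (fun n => G n t) =ᶠ[atTop] (fun n => ENNReal.ofReal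
          ((1 / Real.Gamma (α t)) * min (t ^ (α t - 1)) ((t - ε n) ^ (α t - 1)))) := hev
      have htend : Tendsto (fun n => G n t) atTop
          (𝓝 (ENNReal.ofReal ((1 / Real.Gamma (α t)) * t ^ (α t - 1)))) :=
        Filter.Tendsto.congr' hev'.symm htend2
      exact le_of_eq htend.liminf_eq.symm
    · rw [Set.indicator_of_notMem htIoc]
      exact zero_le
  have hfinal1 : ∫⁻ t, (Set.Ioc (0:ℝ) 1).indicator
      (fun t => ENNReal.ofReal ((1 / Real.Gamma (α t)) * t ^ (α t - 1))) t ∂μ ≤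
      ENNReal.ofReal C :=
    calc ∫⁻ t, (Set.Ioc (0:ℝ) 1).indicator
          (fun t => ENNReal.ofReal ((1 / Real.Gamma (α t)) * t ^ (α t - 1))) t ∂μ
        ≤ ∫⁻ t, liminf (fun n => G n t) atTop ∂μ := lintegral_mono_ae hliminf
      _ ≤ liminf (fun n => ∫⁻ t, G n t ∂μ) atTop := lintegral_liminf_le hGmeas
      _ ≤ liminf (fun _ : ℕ => ENNReal.ofReal C) atTop :=
          Filter.liminf_le_liminf (Filter.Eventually.of_forall hclaimA)
      _ = ENNReal.ofReal C := Filter.liminf_const _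
  have hI1 : ∫⁻ t, (Set.Ioc (0:ℝ) 1).indicator
      (fun t => ENNReal.ofReal ((1 / Real.Gamma (α t)) * t ^ (α t - 1))) t ∂μ =
      ∫⁻ t in Set.Ioc (0:ℝ) 1, ENNReal.ofReal ((1 / Real.Gamma (α t)) * t ^ (α t - 1)) ∂volume := by
    rw [lintegral_indicator measurableSet_Ioc, hμ, Measure.restrict_restrict measurableSet_Ioc,
      Set.inter_eq_left.mpr Set.Ioc_subset_Icc_self]
  have hcomp : (∫⁻ t in Set.Ioc (0 : ℝ) 1, ENNReal.ofReal (α t * t ^ (α t - 1))) ≤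
      ENNReal.ofReal M *
        ∫⁻ t in Set.Ioc (0:ℝ) 1, ENNReal.ofReal ((1 / Real.Gamma (α t)) * t ^ (α t - 1)) ∂volume := by
    have hmeas2 : Measurable fun t : ℝ =>
        ENNReal.ofReal ((1 / Real.Gamma (α t)) * t ^ (α t - 1)) := by
      apply ENNReal.measurable_ofReal.comp
      exact (measurable_const.div (measurable_Gamma.comp hα)).mul
        (measurable_id.pow (hα.sub measurable_const))
    rw [← lintegral_const_mul _ hmeas2]
    apply lintegral_mono_ae
    have hposIoc : ∀ᵐ t ∂volume.restrict (Set.Ioc (0:ℝ) 1), 0 < α t :=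
      ae_restrict_of_ae_restrict_of_subset Set.Ioc_subset_Icc_self hpos
    filter_upwards [hposIoc, ae_restrict_mem measurableSet_Ioc] with t hαt ht
    have htB : α t ≤ B := hB t ⟨ht.1.le, ht.2⟩
    have hdiv : α t / M ≤ 1 / Real.Gamma (α t) := le_one_div_Gamma hαt hM (hΓM _ hαt htB)
    have htp : (0:ℝ) ≤ t ^ (α t - 1) := Real.rpow_nonneg ht.1.le _
    rw [← ENNReal.ofReal_mul hM.le]
    apply ENNReal.ofReal_le_ofReal
    have h1 : α t ≤ M * (1 / Real.Gamma (α t)) := by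
      have := mul_le_mul_of_nonneg_left hdiv hM.le
      calc α t = M * (α t / M) := by field_simp
        _ ≤ M * (1 / Real.Gamma (α t)) := this
    calc α t * t ^ (α t - 1) ≤ (M * (1 / Real.Gamma (α t))) * t ^ (α t - 1) :=
          mul_le_mul_of_nonneg_right h1 htp
      _ = M * (1 / Real.Gamma (α t) * t ^ (α t - 1)) := by ring
  calc (∫⁻ t in Set.Ioc (0 : ℝ) 1, ENNReal.ofReal (α t * t ^ (α t - 1)))
      ≤ ENNReal.ofReal M *
        ∫⁻ t in Set.Ioc (0:ℝ) 1, ENNReal.ofReal ((1 / Real.Gamma (α t)) * t ^ (α t - 1)) ∂volume :=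
        hcomp
    _ ≤ ENNReal.ofReal M * ENNReal.ofReal C := by
        apply mul_le_mul_right
        rw [← hI1]
        exact hfinal1
    _ < ⊤ := ENNReal.mul_lt_top ENNReal.ofReal_lt_top ENNReal.ofReal_lt_top

/-- **Proposition (criterion for `L_1`-boundedness under a regularity assumption).**
If `α` is bounded, measurable, a.e. positive and there are `c₁, c₂ > 0` with
`c₁ α(s) ≤ α(t) ≤ c₂ α(s)` whenever `0 ≤ s ≤ t ≤ min(2s,1)`, then `R^{α(·)}` is bounded
on `L_1[0,1]` iff `∫₀¹ α(t) t^{α(t)−1} dt < ∞`. -/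
theorem stmt_5 (α : ℝ → ℝ) (hα : Measurable α)
    (hpos : ∀ᵐ t ∂(volume.restrict (Set.Icc (0 : ℝ) 1)), 0 < α t)
    (hbdd : ∃ B : ℝ, ∀ t ∈ Set.Icc (0 : ℝ) 1, α t ≤ B)
    (c₁ c₂ : ℝ) (hc₁ : 0 < c₁) (hc₂ : 0 < c₂)
    (hreg : ∀ s t : ℝ, 0 ≤ s → s ≤ t → t ≤ min (2 * s) 1 →
      c₁ * α s ≤ α t ∧ α t ≤ c₂ * α s) :
    (∃ C : ℝ, 0 < C ∧
        ∀ f : ℝ → ℝ, MemLp f 1 (volume.restrict (Set.Icc (0 : ℝ) 1)) →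
          eLpNorm (RL α f) 1 (volume.restrict (Set.Icc (0 : ℝ) 1)) ≤
            ENNReal.ofReal C * eLpNorm f 1 (volume.restrict (Set.Icc (0 : ℝ) 1))) ↔
      (∫⁻ t in Set.Ioc (0 : ℝ) 1, ENNReal.ofReal (α t * t ^ (α t - 1))) < ⊤ := by
  obtain ⟨B, hB⟩ := hbdd
  have hB' : ∀ t ∈ Set.Icc (0:ℝ) 1, α t ≤ max B 1 :=
    fun t ht => (hB t ht).trans (le_max_left _ _)
  obtain ⟨m, M, hm, hM, hbounds⟩ := gamma_bounds (max B 1) (le_max_right _ _)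
  constructor
  · rintro ⟨C, hC, hbound⟩
    exact finite_of_bounded α hα hpos (max B 1) M hM hB'
      (fun a ha haB => (hbounds a ha haB).2) C hC hbound
  · intro hJ
    exact bounded_of_finite α hα hpos (max B 1) m hm hB'
      (fun a ha haB => (hbounds a ha haB).1) c₁ c₂ hc₁ hc₂ hreg hJ
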